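/- For all n ≥ 2, L_{n+1}(q) = 3·L_n(q) + 2(q−1)·L_{n−1}(q). -/

import Mathlib

open Polynomial

lemma sum_Ico_double {M : Type*} [AddCommMonoid M] (f : ℕ → M) (a b : ℕ) :
    ∑ j ∈ Finset.Ico (2 * a) (2 * b), f j
      = ∑ k ∈ Finset.Ico a b, (f (2 * k) + f (2 * k + 1)) := by
  induction b with
  | zero => simp
  | succ c ih =>
    rcases le_or_gt (c + 1) a with h | h
    · rw [Finset.Ico_eq_empty (by omega), Finset.Ico_eq_empty (by omega)]
      simp
    · have hac : a ≤ c := by omega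
      rw [Finset.sum_Ico_succ_top hac,
        show 2 * (c + 1) = 2 * c + 1 + 1 by ring,
        Finset.sum_Ico_succ_top (by omega), Finset.sum_Ico_succ_top (by omega), ih,
        add_assoc]

lemma sum_Ico_shift {M : Type*} [AddCommMonoid M] (f : ℕ → M) (a b : ℕ) :
    ∑ k ∈ Finset.Ico a b, f (k + 1) = ∑ j ∈ Finset.Ico (a + 1) (b + 1), f j := by
  induction b with
  | zero =>
    rw [Finset.Ico_eq_empty (by omega), Finset.Ico_eq_empty (by omega)]
    simp
  | succ c ih =>
    rcases le_or_gt (c + 1) a with h | h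
    · rw [Finset.Ico_eq_empty (by omega), Finset.Ico_eq_empty (by omega)]
      simp
    · have hac : a ≤ c := by omega
      rw [Finset.sum_Ico_succ_top hac, Finset.sum_Ico_succ_top (by omega), ih]

theorem L_recurrence (b : ℕ → Polynomial ℤ) (L : ℕ → Polynomial ℤ)
    (hb1 : b 1 = 1)
    (hb2 : ∀ n ≥ 1, b (2 * n) = b n)
    (hb41 : ∀ n ≥ 1, b (4 * n + 1) = X * b (2 * n) + b (2 * n + 1))
    (hb43 : ∀ n : ℕ, b (4 * n + 3) = b (2 * n + 1) + X * b (2 * n + 2))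
    (hL : ∀ n ≥ 1, L n = 2 * (∑ k ∈ Finset.Icc 1 (2 ^ n - 1), b k) + b (2 ^ n)) :
    ∀ n ≥ 2, L (n + 1) = 3 * L n + 2 * (X - 1) * L (n - 1) := by
  have hpow : ∀ m : ℕ, 1 ≤ 2 ^ m := fun m => Nat.one_le_two_pow
  have hb2pow : ∀ m : ℕ, b (2 ^ m) = 1 := by
    intro m
    induction m with
    | zero => simpa using hb1
    | succ k ih => rw [pow_succ, mul_comm, hb2 _ (hpow k), ih]
  set T : ℕ → Polynomial ℤ := fun m => ∑ k ∈ Finset.Ico (2 ^ m) (2 ^ (m + 1)), b k with hT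
  set S : ℕ → Polynomial ℤ := fun m => ∑ k ∈ Finset.Ico 1 (2 ^ m), b k with hS
  have hTm : ∀ m, (∑ k ∈ Finset.Ico (2 ^ m) (2 ^ (m + 1)), b k) = T m := fun m => rfl
  have hSm : ∀ m, (∑ k ∈ Finset.Ico 1 (2 ^ m), b k) = S m := fun m => rfl
  -- L m = 2 * S m + 1
  have hLS : ∀ m, 1 ≤ m → L m = 2 * S m + 1 := by
    intro m hm
    have hIcc : Finset.Icc 1 (2 ^ m - 1) = Finset.Ico 1 (2 ^ m) := by
      rw [← Finset.Ico_add_one_right_eq_Icc]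
      congr 1
      have := hpow m
      omega
    rw [hL m hm, hb2pow, hIcc, hSm]
  -- S (m+1) = S m + T m
  have hSsucc : ∀ m, S (m + 1) = S m + T m := by
    intro m
    rw [← hSm, ← hSm, ← hTm]
    exact (Finset.sum_Ico_consecutive _ (hpow m)
      (Nat.pow_le_pow_right (by norm_num) (by omega))).symm
  -- T (m+1) in terms of halved indices
  have hThalf : ∀ m, T (m + 1)
      = ∑ k ∈ Finset.Ico (2 ^ m) (2 ^ (m + 1)), (b k + b (2 * k + 1)) := by
    intro m
    rw [← hTm]
    rw [show (2 : ℕ) ^ (m + 1) = 2 * 2 ^ m by ring,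
      show (2 : ℕ) ^ (m + 1 + 1) = 2 * (2 * 2 ^ m) by ring, sum_Ico_double]
    refine Finset.sum_congr rfl ?_
    intro k hk
    have hk1 : 1 ≤ k := le_trans (hpow m) (Finset.mem_Ico.mp hk).1
    rw [hb2 k hk1]
  -- the shifted sum
  have hshift : ∀ m, ∑ k ∈ Finset.Ico (2 ^ m) (2 ^ (m + 1)), b (2 * k + 2) = T m := by
    intro m
    have h1 : ∀ k ∈ Finset.Ico (2 ^ m) (2 ^ (m + 1)), b (2 * k + 2) = b (k + 1) := by
      intro k hk
      rw [show 2 * k + 2 = 2 * (k + 1) by ring, hb2 (k + 1) (by omega)]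
    have hlt : 2 ^ m < 2 ^ (m + 1) := Nat.pow_lt_pow_right (by norm_num) (by omega)
    rw [Finset.sum_congr rfl h1, sum_Ico_shift, Finset.sum_Ico_succ_top (by omega),
      hb2pow, ← hTm, Finset.sum_eq_sum_Ico_succ_bot hlt, hb2pow]
    abel
  -- recurrence for T
  have hTrec : ∀ m, T (m + 2) = 3 * T (m + 1) + 2 * (X - 1) * T m := by
    intro m
    have esum : T (m + 2) = ∑ k ∈ Finset.Ico (2 ^ m) (2 ^ (m + 1)),
        (b k + (X * b k + b (2 * k + 1)) + b (2 * k + 1)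
          + (b (2 * k + 1) + X * b (2 * k + 2))) := by
      rw [← hTm]
      rw [show (2 : ℕ) ^ (m + 2) = 2 * (2 * 2 ^ m) by ring,
        show (2 : ℕ) ^ (m + 2 + 1) = 2 * (2 * (2 * 2 ^ m)) by ring, sum_Ico_double,
        show (2 : ℕ) * (2 * 2 ^ m) = 2 * (2 * 2 ^ m) by ring]
      rw [sum_Ico_double (fun j => b (2 * j) + b (2 * j + 1)) (2 ^ m) (2 * 2 ^ m),
        show 2 * (2 : ℕ) ^ m = 2 ^ (m + 1) by ring]
      refine Finset.sum_congr rfl ?_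
      intro k hk
      have hk1 : 1 ≤ k := le_trans (hpow m) (Finset.mem_Ico.mp hk).1
      rw [show 2 * (2 * k) + 1 = 4 * k + 1 by ring, show 2 * (2 * k + 1) + 1 = 4 * k + 3 by ring,
        hb41 k hk1, hb43 k, hb2 (2 * k) (by omega), hb2 (2 * k + 1) (by omega), hb2 k hk1]
      ring
    have esplit : (∑ k ∈ Finset.Ico (2 ^ m) (2 ^ (m + 1)),
        (b k + (X * b k + b (2 * k + 1)) + b (2 * k + 1)
          + (b (2 * k + 1) + X * b (2 * k + 2))))
        = T m + X * T m + 3 * (∑ k ∈ Finset.Ico (2 ^ m) (2 ^ (m + 1)), b (2 * k + 1))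
          + X * (∑ k ∈ Finset.Ico (2 ^ m) (2 ^ (m + 1)), b (2 * k + 2)) := by
      rw [← hTm]
      simp only [Finset.mul_sum, ← Finset.sum_add_distrib]
      exact Finset.sum_congr rfl fun k _ => by ring
    have hBsum : T (m + 1) = T m + ∑ k ∈ Finset.Ico (2 ^ m) (2 ^ (m + 1)), b (2 * k + 1) := by
      rw [hThalf m, Finset.sum_add_distrib, hTm]
    linear_combination esum + esplit - 3 * hBsum + X * hshift m
  -- recurrence for S
  have hSrec : ∀ m, S (m + 2) = 3 * S (m + 1) + 2 * (X - 1) * S m + X := by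
    intro m
    induction m with
    | zero =>
      have hS0 : S 0 = 0 := by rw [← hSm]; simp
      have hS1 : S 1 = 1 := by
        rw [← hSm]
        simp [hb1]
      have hb2' : b 2 = 1 := by rw [show (2 : ℕ) = 2 * 1 by ring, hb2 1 le_rfl, hb1]
      have hb3 : b 3 = 1 + X := by
        have := hb43 0
        simpa [hb1, hb2'] using this
      have hS2 : S 2 = 3 + X := by
        rw [← hSm]
        rw [show (2 : ℕ) ^ 2 = 4 by norm_num,
          Finset.sum_Ico_succ_top (by norm_num), Finset.sum_Ico_succ_top (by norm_num),
          Finset.sum_Ico_succ_top (by norm_num), Finset.Ico_self, Finset.sum_empty,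
          hb1, hb2', hb3]
        ring
      rw [hS0, hS1, hS2]
      ring
    | succ k ih =>
      have e1 := hSsucc (k + 2)
      have e2 := hSsucc (k + 1)
      have e3 := hSsucc k
      have e4 := hTrec k
      linear_combination e1 + e4 - 3 * e2 - 2 * (X - 1) * e3 + ih
  intro n hn
  obtain ⟨m, rfl⟩ : ∃ m, n = m + 2 := ⟨n - 2, by omega⟩
  have l1 := hLS (m + 3) (by omega)
  have l2 := hLS (m + 2) (by omega)
  have l3 := hLS (m + 1) (by omega)
  have s := hSrec (m + 1)
  show L (m + 3) = 3 * L (m + 2) + 2 * (X - 1) * L (m + 1)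
  linear_combination l1 - 3 * l2 - 2 * (X - 1) * l3 + 2 * s
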